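/- Let R ⊂ ℤ^d be a finite set of admissible steps. The following are equivalent: (a) for any x, y ∈ ℤ^d, all admissible paths from x to y (paths whose increments lie in R) have the same number of steps; (b) there exists a vector û ∈ ℝ^d such that û · z = 1 for all z ∈ R. -/

import Mathlib

section Aux

variable {d : ℕ}

private lemma path_of_list (R : Finset (Fin d → ℤ)) (L : List (Fin d → ℤ)) (hL : ∀ z ∈ L, z ∈ R) :
    ∃ p : ℕ → Fin d → ℤ, p 0 = 0 ∧ p L.length = L.sum ∧
      (∀ i < L.length, p (i + 1) - p i ∈ R) := by
  refine ⟨fun i => (L.take i).sum, by simp, by simp, fun i hi => ?_⟩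
  have : (L.take (i+1)).sum = (L.take i).sum + L.get ⟨i, hi⟩ := List.sum_take_succ L i hi
  show (L.take (i+1)).sum - (L.take i).sum ∈ R
  rw [this]
  simpa using hL _ (L.get_mem ⟨i, hi⟩)

private lemma list_of_natcombo (R : Finset (Fin d → ℤ)) (a : {z // z ∈ R} → ℕ) :
    ∃ L : List (Fin d → ℤ), (∀ z ∈ L, z ∈ R) ∧
      L.length = ∑ z, a z ∧ L.sum = ∑ z, a z • z.val := by
  classical
  refine ⟨(∑ z, Multiset.replicate (a z) z.val).toList, ?_, ?_, ?_⟩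
  · intro z hz
    rw [Multiset.mem_toList, Multiset.mem_sum] at hz
    obtain ⟨w, _, hw⟩ := hz
    rw [Multiset.eq_of_mem_replicate hw]
    exact w.2
  · rw [Multiset.length_toList, Multiset.card_sum]
    simp [Multiset.card_replicate]
  · rw [Multiset.sum_toList]
    rw [Multiset.sum_sum]
    simp [Multiset.sum_replicate]

private lemma int_relation (R : Finset (Fin d → ℤ))
    (hnat : ∀ a b : {z // z ∈ R} → ℕ,
      (∑ z, a z • z.val) = (∑ z, b z • z.val) → (∑ z, a z) = (∑ z, b z))
    (c : {z // z ∈ R} → ℤ) (hc : (∑ z, c z • z.val) = 0) : (∑ z, c z) = 0 := by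
  classical
  set a : {z // z ∈ R} → ℕ := fun z => (c z).toNat
  set b : {z // z ∈ R} → ℕ := fun z => (-(c z)).toNat
  have hab : ∀ z, c z = (a z : ℤ) - (b z : ℤ) := by
    intro z
    simp [a, b, Int.toNat_sub_toNat_neg]
  have h1 : (∑ z, a z • z.val) = (∑ z, b z • z.val) := by
    have : (∑ z, ((a z : ℤ) • z.val - (b z : ℤ) • z.val)) = 0 := by
      rw [← hc]; congr 1; funext z; rw [hab z, sub_smul]
    rw [Finset.sum_sub_distrib, sub_eq_zero] at this
    simpa [natCast_zsmul] using this
  have h2 := hnat a b h1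
  have : (∑ z, c z) = (∑ z, ((a z : ℤ) - (b z : ℤ))) := by
    congr 1; funext z; exact hab z
  rw [this, Finset.sum_sub_distrib, ← Nat.cast_sum, ← Nat.cast_sum, h2, sub_self]

private lemma exists_uq (R : Finset (Fin d → ℤ))
    (hint : ∀ c : {z // z ∈ R} → ℤ, (∑ z, c z • z.val) = 0 → (∑ z, c z) = 0) :
    ∃ u : Fin d → ℚ, ∀ z ∈ R, ∑ i, u i * (z i : ℚ) = 1 := by
  classical
  set ι : (Fin d → ℤ) → (Fin d → ℚ) := fun z i => (z i : ℚ) with hι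
  -- rational relation
  have hrat : ∀ c : {z // z ∈ R} → ℚ, (∑ z, c z • ι z.val) = 0 → (∑ z, c z) = 0 := by
    intro c hc
    set n : ℕ := ∏ z, (c z).den with hn
    have hden : ∀ z : {z // z ∈ R}, ((c z).den : ℚ) ∣ (n : ℚ) := by
      intro z
      exact_mod_cast Nat.cast_dvd_cast (Finset.dvd_prod_of_mem _ (Finset.mem_univ z))
    have hnum : ∀ z : {z // z ∈ R}, ∃ m : ℤ, (n : ℚ) * c z = (m : ℚ) := by
      intro z
      obtain ⟨k, hk⟩ := Finset.dvd_prod_of_mem (fun z => (c z).den) (Finset.mem_univ z)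
      refine ⟨(c z).num * k, ?_⟩
      have hcast : (n : ℚ) = ((c z).den : ℚ) * k := by exact_mod_cast congrArg (Nat.cast : ℕ → ℚ) hk
      push_cast
      calc (n : ℚ) * c z = (c z * (c z).den) * k := by rw [hcast]; ring
        _ = ((c z).num : ℚ) * k := by rw [Rat.mul_den_eq_num]
    choose m hm using hnum
    have hn0 : (n : ℚ) ≠ 0 := by
      simp only [hn]
      exact_mod_cast Finset.prod_ne_zero_iff.2 fun z _ => (c z).den_nz
    -- integer relation for m
    have hmrel : (∑ z, m z • z.val) = 0 := by
      have key : ι (∑ z, m z • z.val) = ι 0 := by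
        have expand : ι (∑ z, m z • z.val) = ∑ z, (m z : ℚ) • ι z.val := by
          funext i
          simp [ι, Finset.sum_apply]
        rw [expand]
        have : ∑ z, (m z : ℚ) • ι z.val = (n : ℚ) • ∑ z, c z • ι z.val := by
          rw [Finset.smul_sum]
          congr 1; funext z
          rw [smul_smul, ← hm z]
        rw [this, hc, smul_zero]
        funext i; simp [ι]
      have hinj : Function.Injective ι := by
        intro x y hxy
        funext i
        have := congrFun hxy i
        simp only [ι] at this
        exact_mod_cast this
      exact hinj key
    have hms := hint m hmrel
    have hsum : (n : ℚ) * (∑ z, c z) = 0 := by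
      rw [Finset.mul_sum]
      have h2 : ∀ z ∈ Finset.univ, (n : ℚ) * c z = (m z : ℚ) := fun z _ => hm z
      rw [Finset.sum_congr rfl h2, ← Int.cast_sum, hms, Int.cast_zero]
    rcases mul_eq_zero.1 hsum with h | h
    · exact absurd h hn0
    · exact h
  -- linear algebra: extend the "length" functional
  let T : ({z // z ∈ R} → ℚ) →ₗ[ℚ] (Fin d → ℚ) :=
    { toFun := fun c => ∑ z, c z • ι z.val
      map_add' := by intro c c'; simp [add_smul, Finset.sum_add_distrib]
      map_smul' := by intro r c; simp [smul_smul, Finset.smul_sum] }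
  let l : ({z // z ∈ R} → ℚ) →ₗ[ℚ] ℚ :=
    { toFun := fun c => ∑ z, c z
      map_add' := by intro c c'; simp [Finset.sum_add_distrib]
      map_smul' := by intro r c; simp [Finset.mul_sum] }
  have hker : LinearMap.ker T ≤ LinearMap.ker l := by
    intro c hc
    simp only [LinearMap.mem_ker] at *
    exact hrat c hc
  let g : LinearMap.range T →ₗ[ℚ] ℚ :=
    ((LinearMap.ker T).liftQ l hker).comp (LinearMap.quotKerEquivRange T).symm.toLinearMap
  obtain ⟨u', hu'⟩ := LinearMap.exists_extend g
  have hg : ∀ c : {z // z ∈ R} → ℚ, g ⟨T c, LinearMap.mem_range_self T c⟩ = l c := by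
    intro c
    have h1 : (LinearMap.quotKerEquivRange T).symm ⟨T c, LinearMap.mem_range_self T c⟩
        = Submodule.Quotient.mk c := by
      rw [LinearEquiv.symm_apply_eq]
      exact Subtype.ext (LinearMap.quotKerEquivRange_apply_mk T c).symm
    simp only [g, LinearMap.comp_apply, LinearEquiv.coe_toLinearMap, h1]
    exact Submodule.liftQ_apply _ _ _
  have hval : ∀ z ∈ R, u' (ι z) = 1 := by
    intro z hz
    let cz : {z // z ∈ R} → ℚ := fun w => if w = ⟨z, hz⟩ then 1 else 0
    have hT : T cz = ι z := by
      simp only [T, LinearMap.coe_mk, AddHom.coe_mk, cz]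
      show ∑ w : {z // z ∈ R}, (if w = ⟨z, hz⟩ then (1 : ℚ) else 0) • ι w.val = ι z
      rw [Finset.sum_eq_single (⟨z, hz⟩ : {z // z ∈ R})]
      · simp
      · intro w _ hw; simp [hw]
      · intro h; exact absurd (Finset.mem_univ _) h
    have hl : l cz = 1 := by
      simp only [l, LinearMap.coe_mk, AddHom.coe_mk, cz]
      show ∑ w : {z // z ∈ R}, (if w = ⟨z, hz⟩ then (1 : ℚ) else 0) = 1
      rw [Finset.sum_eq_single (⟨z, hz⟩ : {z // z ∈ R})]
      · simp
      · intro w _ hw; simp [hw]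
      · intro h; exact absurd (Finset.mem_univ _) h
    have hmem : ι z ∈ LinearMap.range T := ⟨cz, hT⟩
    have : u' (ι z) = g ⟨ι z, hmem⟩ := by
      have := congrArg (fun f => f ⟨ι z, hmem⟩) hu'
      simpa using this
    rw [this]
    have : (⟨ι z, hmem⟩ : LinearMap.range T) = ⟨T cz, LinearMap.mem_range_self T cz⟩ :=
      Subtype.ext hT.symm
    rw [this, hg, hl]
  refine ⟨fun i => u' (Pi.single i 1), fun z hz => ?_⟩
  have hdecomp : ι z = ∑ i, (z i : ℚ) • (Pi.single i 1 : Fin d → ℚ) := by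
    funext j
    simp [ι, Finset.sum_apply, Pi.single_apply]
  have := hval z hz
  rw [hdecomp, map_sum] at this
  simp only [map_smul, smul_eq_mul] at this
  calc ∑ i, u' (Pi.single i 1) * (z i : ℚ)
      = ∑ i, (z i : ℚ) * u' (Pi.single i 1) := Finset.sum_congr rfl fun i _ => mul_comm _ _
    _ = 1 := this

private lemma path_dot (u : Fin d → ℝ) (R : Finset (Fin d → ℤ))
    (hu : ∀ z ∈ R, ∑ i, u i * (z i : ℝ) = 1)
    (p : ℕ → Fin d → ℤ) (k : ℕ) (hp : ∀ i < k, p (i+1) - p i ∈ R) :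
    ∑ i, u i * (p k i : ℝ) = (∑ i, u i * (p 0 i : ℝ)) + k := by
  induction k with
  | zero => simp
  | succ n ih =>
    have h1 := ih (fun i hi => hp i (Nat.lt_succ_of_lt hi))
    have h2 := hu _ (hp n (Nat.lt_succ_self n))
    have h3 : ∑ i, u i * (((p (n+1) - p n) i : ℤ) : ℝ)
        = (∑ i, u i * (p (n+1) i : ℝ)) - ∑ i, u i * (p n i : ℝ) := by
      rw [← Finset.sum_sub_distrib]
      refine Finset.sum_congr rfl fun i _ => ?_
      push_cast [Pi.sub_apply]
      ring
    rw [h3] at h2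
    push_cast
    linarith

end Aux

/-- Let `R ⊂ ℤ^d` be a nonempty finite set of admissible steps.  The following are equivalent:
(a) for any `x, y ∈ ℤ^d`, all admissible paths from `x` to `y` (paths whose increments lie in
`R`) have the same number of steps; (b) there exists a vector `û ∈ ℝ^d` such that `û · z = 1`
for all `z ∈ R`. -/
theorem same_length_iff_exists_uhat {d : ℕ} (R : Finset (Fin d → ℤ)) (hR : R.Nonempty) :
    (∀ (x y : Fin d → ℤ) (k l : ℕ) (p q : ℕ → Fin d → ℤ),
        p 0 = x → p k = y → (∀ i < k, p (i + 1) - p i ∈ R) →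
        q 0 = x → q l = y → (∀ i < l, q (i + 1) - q i ∈ R) → k = l)
    ↔ ∃ u : Fin d → ℝ, ∀ z ∈ R, ∑ i, u i * (z i : ℝ) = 1 := by
  classical
  constructor
  · intro h
    have hlist : ∀ L M : List (Fin d → ℤ), (∀ z ∈ L, z ∈ R) → (∀ z ∈ M, z ∈ R) →
        L.sum = M.sum → L.length = M.length := by
      intro L M hL hM hsum
      obtain ⟨p, hp0, hpk, hpR⟩ := path_of_list R L hL
      obtain ⟨q, hq0, hql, hqR⟩ := path_of_list R M hM
      exact h 0 L.sum L.length M.length p q hp0 hpk hpR hq0 (hsum ▸ hql) hqR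
    have hnat : ∀ a b : {z // z ∈ R} → ℕ,
        (∑ z, a z • z.val) = (∑ z, b z • z.val) → (∑ z, a z) = (∑ z, b z) := by
      intro a b hab
      obtain ⟨L, hL, hLlen, hLsum⟩ := list_of_natcombo R a
      obtain ⟨M, hM, hMlen, hMsum⟩ := list_of_natcombo R b
      rw [← hLlen, ← hMlen]
      exact hlist L M hL hM (by rw [hLsum, hMsum, hab])
    obtain ⟨uq, huq⟩ := exists_uq R (int_relation R hnat)
    refine ⟨fun i => ((uq i : ℚ) : ℝ), fun z hz => ?_⟩
    have h1 := huq z hz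
    have h2 : ((∑ i, uq i * (z i : ℚ) : ℚ) : ℝ) = 1 := by rw [h1]; norm_num
    push_cast at h2
    simpa using h2
  · rintro ⟨u, hu⟩ x y k l p q hp0 hpk hpR hq0 hql hqR
    have A := path_dot u R hu p k hpR
    have B := path_dot u R hu q l hqR
    rw [hp0, hpk] at A
    rw [hq0, hql] at B
    have : (k : ℝ) = (l : ℝ) := by linarith
    exact_mod_cast this
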